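/- Let a, b, c > 0 with a² = bc, and consider the (right-angled) triangle in ℝ² with vertices A = (0, a), B = (−b, 0), C = (c, 0), with b ≠ c. Then there do NOT exist a point O ∈ ℝ², a constant m, and c₀ > 0 such that W(P) = c₀·dist(P, O)² + m for all P; i.e. the loci {P : W(P) = k} are never circles for such a triangle. -/

import Mathlib

noncomputable section

/-- The point `(x, y)` of the Euclidean plane `ℝ²`. -/
def pt (x y : ℝ) : EuclideanSpace ℝ (Fin 2) :=
  (WithLp.equiv 2 (Fin 2 → ℝ)).symm ![x, y]

/-- The line through `X` and `Y`, i.e. the affine span of `{X, Y}`, as a set. -/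
def lineThrough (X Y : EuclideanSpace ℝ (Fin 2)) : Set (EuclideanSpace ℝ (Fin 2)) :=
  (affineSpan ℝ {X, Y} : AffineSubspace ℝ (EuclideanSpace ℝ (Fin 2)))

/-- The distance sum function of the triangle `ABC`:
`V(P) = dist(P, line BC) + dist(P, line CA) + dist(P, line AB)`. -/
def vSum (A B C P : EuclideanSpace ℝ (Fin 2)) : ℝ :=
  Metric.infDist P (lineThrough B C) + Metric.infDist P (lineThrough C A) +
    Metric.infDist P (lineThrough A B)

/-- The squared-distance sum function of the triangle `ABC`:
`W(P) = dist(P, line BC)² + dist(P, line CA)² + dist(P, line AB)²`. -/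
def wSum (A B C P : EuclideanSpace ℝ (Fin 2)) : ℝ :=
  Metric.infDist P (lineThrough B C) ^ 2 + Metric.infDist P (lineThrough C A) ^ 2 +
    Metric.infDist P (lineThrough A B) ^ 2

lemma mem_lineThrough_iff {X Y Q : EuclideanSpace ℝ (Fin 2)} :
    Q ∈ lineThrough X Y ↔ ∃ t : ℝ, Q = t • (Y - X) + X := by
  have h : Q = (Q - X) +ᵥ X := by simp
  rw [lineThrough, SetLike.mem_coe]
  constructor
  · intro hQ
    rw [h, vadd_left_mem_affineSpan_pair] at hQ
    obtain ⟨r, hr⟩ := hQ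
    exact ⟨r, by rw [vsub_eq_sub] at hr; rw [hr]; abel⟩
  · rintro ⟨t, rfl⟩
    have h2 : t • (Y - X) + X = (t • (Y -ᵥ X)) +ᵥ X := by simp
    rw [h2]
    exact AffineSubspace.smul_vsub_vadd_mem _ t
      (right_mem_affineSpan_pair ℝ X Y)
      (left_mem_affineSpan_pair ℝ X Y)
      (left_mem_affineSpan_pair ℝ X Y)

lemma dist_pt (x1 y1 x2 y2 : ℝ) :
    dist (pt x1 y1) (pt x2 y2) = Real.sqrt ((x1 - x2) ^ 2 + (y1 - y2) ^ 2) := by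
  rw [EuclideanSpace.dist_eq]
  simp [Fin.sum_univ_two, pt, Real.dist_eq, sq_abs]

lemma pt_line_point (x1 y1 x2 y2 t : ℝ) :
    t • (pt x2 y2 - pt x1 y1) + pt x1 y1 = pt (x1 + t * (x2 - x1)) (y1 + t * (y2 - y1)) := by
  apply PiLp.ext
  intro i
  fin_cases i <;>
    simp [pt, PiLp.add_apply, PiLp.smul_apply, PiLp.sub_apply] <;> ring

set_option maxHeartbeats 2000000 in
/-- Squared distance from a point to a line through two points, in coordinates. -/
lemma infDist_sq (px py x1 y1 x2 y2 : ℝ) (h : 0 < (x2 - x1) ^ 2 + (y2 - y1) ^ 2) :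
    Metric.infDist (pt px py) (lineThrough (pt x1 y1) (pt x2 y2)) ^ 2 =
      ((px - x1) * (y2 - y1) - (py - y1) * (x2 - x1)) ^ 2
        / ((x2 - x1) ^ 2 + (y2 - y1) ^ 2) := by
  have hLs : (0:ℝ) < Real.sqrt ((x2 - x1) ^ 2 + (y2 - y1) ^ 2) := Real.sqrt_pos.2 h
  have hd : Metric.infDist (pt px py) (lineThrough (pt x1 y1) (pt x2 y2)) =
      |(px - x1) * (y2 - y1) - (py - y1) * (x2 - x1)|
        / Real.sqrt ((x2 - x1) ^ 2 + (y2 - y1) ^ 2) := by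
    apply le_antisymm
    · obtain ⟨t, ht⟩ : ∃ t : ℝ, t = ((px - x1) * (x2 - x1) + (py - y1) * (y2 - y1))
          / ((x2 - x1) ^ 2 + (y2 - y1) ^ 2) := ⟨_, rfl⟩
      have htL : t * ((x2 - x1) ^ 2 + (y2 - y1) ^ 2)
          = (px - x1) * (x2 - x1) + (py - y1) * (y2 - y1) := by
        rw [ht, div_mul_cancel₀ _ h.ne']
      have hmem : pt (x1 + t * (x2 - x1)) (y1 + t * (y2 - y1)) ∈
          lineThrough (pt x1 y1) (pt x2 y2) := by
        rw [mem_lineThrough_iff]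
        exact ⟨t, (pt_line_point _ _ _ _ _).symm⟩
      refine le_trans (Metric.infDist_le_dist_of_mem hmem) ?_
      rw [dist_pt]
      have hval : (px - (x1 + t * (x2 - x1))) ^ 2 + (py - (y1 + t * (y2 - y1))) ^ 2
          = ((px - x1) * (y2 - y1) - (py - y1) * (x2 - x1)) ^ 2
            / ((x2 - x1) ^ 2 + (y2 - y1) ^ 2) := by
        rw [eq_div_iff h.ne']
        linear_combination (t * ((x2 - x1) ^ 2 + (y2 - y1) ^ 2)
          - ((px - x1) * (x2 - x1) + (py - y1) * (y2 - y1))) * htL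
      rw [hval, Real.sqrt_div (sq_nonneg _), Real.sqrt_sq_eq_abs]
    · rw [Metric.infDist_eq_iInf]
      have hne : Nonempty (lineThrough (pt x1 y1) (pt x2 y2)) := by
        refine ⟨⟨pt x1 y1, ?_⟩⟩
        rw [mem_lineThrough_iff]
        exact ⟨0, by simp⟩
      apply le_ciInf
      rintro ⟨Q, hQ⟩
      rw [mem_lineThrough_iff] at hQ
      obtain ⟨t, rfl⟩ := hQ
      show _ ≤ dist (pt px py) (t • (pt x2 y2 - pt x1 y1) + pt x1 y1)
      rw [pt_line_point, dist_pt, div_le_iff₀ hLs, ← Real.sqrt_mul (by positivity),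
        ← Real.sqrt_sq_eq_abs]
      apply Real.sqrt_le_sqrt
      have hid : ((px - (x1 + t * (x2 - x1))) ^ 2 + (py - (y1 + t * (y2 - y1))) ^ 2)
            * ((x2 - x1) ^ 2 + (y2 - y1) ^ 2)
          - ((px - x1) * (y2 - y1) - (py - y1) * (x2 - x1)) ^ 2
          = ((px - x1) * (x2 - x1) + (py - y1) * (y2 - y1)
            - t * ((x2 - x1) ^ 2 + (y2 - y1) ^ 2)) ^ 2 := by ring
      nlinarith [sq_nonneg ((px - x1) * (x2 - x1) + (py - y1) * (y2 - y1)
        - t * ((x2 - x1) ^ 2 + (y2 - y1) ^ 2)), hid]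
  rw [hd, div_pow, sq_abs, Real.sq_sqrt h.le]

lemma dist_pt_sq (x y : ℝ) (O : EuclideanSpace ℝ (Fin 2)) :
    dist (pt x y) O ^ 2 = (x - O 0) ^ 2 + (y - O 1) ^ 2 := by
  rw [EuclideanSpace.dist_eq, Real.sq_sqrt (by positivity)]
  simp [Fin.sum_univ_two, pt, Real.dist_eq, sq_abs]

lemma wSum_val (a b c : ℝ) (ha : 0 < a) (hb : 0 < b) (hc : 0 < c) (x y : ℝ) :
    wSum (pt 0 a) (pt (-b) 0) (pt c 0) (pt x y) =
      y ^ 2 + (a * x - a * c + c * y) ^ 2 / (a ^ 2 + c ^ 2)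
        + (a * x - b * y + a * b) ^ 2 / (a ^ 2 + b ^ 2) := by
  unfold wSum
  rw [infDist_sq x y (-b) 0 c 0 (by nlinarith [sq_nonneg (c + b), mul_pos hb hc]),
    infDist_sq x y c 0 0 a (by nlinarith [sq_nonneg (0 - c), mul_pos ha ha]),
    infDist_sq x y 0 a (-b) 0 (by nlinarith [sq_nonneg (-b - 0), mul_pos ha ha])]
  have h1 : a ^ 2 + c ^ 2 ≠ 0 := by positivity
  have h2 : a ^ 2 + b ^ 2 ≠ 0 := by positivity
  have h3 : (0:ℝ) < b + c := by positivity
  norm_num only [sub_zero, zero_sub, sub_neg_eq_add, neg_sq]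
  field_simp
  ring

/-- The right-angled case `a² = bc` (with `b ≠ c`) in the proof of Conclusion 1: for the
triangle with vertices `(0,a)`, `(−b,0)`, `(c,0)` the loci `{W = k}` are never circles. -/
theorem stmt_16 (a b c : ℝ) (ha : 0 < a) (hb : 0 < b) (hc : 0 < c)
    (habc : a ^ 2 = b * c) (hbc : b ≠ c) :
    ¬ ∃ (O : EuclideanSpace ℝ (Fin 2)) (c₀ m : ℝ), 0 < c₀ ∧
        ∀ P : EuclideanSpace ℝ (Fin 2),
          wSum (pt 0 a) (pt (-b) 0) (pt c 0) P = c₀ * dist P O ^ 2 + m := by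
  rintro ⟨O, c₀, m, hc₀, hW⟩
  have h1 : a ^ 2 + c ^ 2 ≠ 0 := by positivity
  have h2 : a ^ 2 + b ^ 2 ≠ 0 := by positivity
  have e : ∀ x y : ℝ,
      y ^ 2 + (a * x - a * c + c * y) ^ 2 / (a ^ 2 + c ^ 2)
        + (a * x - b * y + a * b) ^ 2 / (a ^ 2 + b ^ 2)
      = c₀ * ((x - O 0) ^ 2 + (y - O 1) ^ 2) + m := by
    intro x y
    rw [← wSum_val a b c ha hb hc x y, ← dist_pt_sq]
    exact hW (pt x y)
  have w1 : ((0:ℝ) ^ 2 + (a * 1 - a * c + c * 0) ^ 2 / (a ^ 2 + c ^ 2)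
        + (a * 1 - b * 0 + a * b) ^ 2 / (a ^ 2 + b ^ 2))
      + ((0:ℝ) ^ 2 + (a * (-1) - a * c + c * 0) ^ 2 / (a ^ 2 + c ^ 2)
        + (a * (-1) - b * 0 + a * b) ^ 2 / (a ^ 2 + b ^ 2))
      - 2 * ((0:ℝ) ^ 2 + (a * 0 - a * c + c * 0) ^ 2 / (a ^ 2 + c ^ 2)
        + (a * 0 - b * 0 + a * b) ^ 2 / (a ^ 2 + b ^ 2)) = 2 := by
    field_simp
    linear_combination (2 * (a ^ 2 + b * c) * (a^2 + b^2) * (a^2 + c^2) + 2 * (-a^6 - (b^2+c^2+b*c)*a^4 + (1 - b^3*c - b*c^3 - b^2*c^2)*a^2 + b*c - b^3*c^3)) * habc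
  have w2 : ((1:ℝ) ^ 2 + (a * 0 - a * c + c * 1) ^ 2 / (a ^ 2 + c ^ 2)
        + (a * 0 - b * 1 + a * b) ^ 2 / (a ^ 2 + b ^ 2))
      + ((-1:ℝ) ^ 2 + (a * 0 - a * c + c * (-1)) ^ 2 / (a ^ 2 + c ^ 2)
        + (a * 0 - b * (-1) + a * b) ^ 2 / (a ^ 2 + b ^ 2))
      - 2 * ((0:ℝ) ^ 2 + (a * 0 - a * c + c * 0) ^ 2 / (a ^ 2 + c ^ 2)
        + (a * 0 - b * 0 + a * b) ^ 2 / (a ^ 2 + b ^ 2)) = 4 := by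
    field_simp
    linear_combination (-(2 * (a ^ 2 + b * c) * (a^2 + b^2) * (a^2 + c^2) + 2 * (-a^6 - (b^2+c^2+b*c)*a^4 + (1 - b^3*c - b*c^3 - b^2*c^2)*a^2 + b*c - b^3*c^3))) * habc
  have q1 : (2:ℝ) = 2 * c₀ := by
    have h10 := e 1 0
    have hm10 := e (-1) 0
    have h00 := e 0 0
    calc (2:ℝ) = _ := w1.symm
      _ = (c₀ * ((1 - O 0) ^ 2 + (0 - O 1) ^ 2) + m)
          + (c₀ * ((-1 - O 0) ^ 2 + (0 - O 1) ^ 2) + m)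
          - 2 * (c₀ * ((0 - O 0) ^ 2 + (0 - O 1) ^ 2) + m) := by rw [h10, hm10, h00]
      _ = 2 * c₀ := by ring
  have q2 : (4:ℝ) = 2 * c₀ := by
    have h01 := e 0 1
    have h0m1 := e 0 (-1)
    have h00 := e 0 0
    calc (4:ℝ) = _ := w2.symm
      _ = (c₀ * ((0 - O 0) ^ 2 + (1 - O 1) ^ 2) + m)
          + (c₀ * ((0 - O 0) ^ 2 + (-1 - O 1) ^ 2) + m)
          - 2 * (c₀ * ((0 - O 0) ^ 2 + (0 - O 1) ^ 2) + m) := by rw [h01, h0m1, h00]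
      _ = 2 * c₀ := by ring
  linarith
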